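/- Let V be a finite nonempty type and μ : V → V → ℝ a symmetric function with μ x y ≥ 0 and μ x x = 0 for all x, y, such that μ x y ≥ 1 whenever μ x y ≠ 0. Set μ_x = ∑_{y} μ x y and assume μ_x > 0 for every x. Let G be the simple graph on V with x adjacent to y iff x ≠ y and μ x y > 0, assumed connected, with graph distance d(x,y). Define L ∈ Matrix V V ℝ by L x y = μ x y / μ_x for x ≠ y and L x x = -1, and for t ≥ 0 set q_t(x,y) = (Matrix.exp (t • L)) x y / μ_y. Then for every t > 0 and all x₀, y ∈ V, (q_t(x₀,y) - q_t(x₀,x₀))^2 ≤ (d(x₀,y) : ℝ) * q_t(x₀,x₀) / t. -/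

import Mathlib

open Matrix in
/-- entries of a diagonal conjugation -/
lemma conj_diag_apply {V : Type*} [Fintype V] [DecidableEq V]
    (U : Matrix V V ℝ) (d : V → ℝ) (x y : V) :
    (U * Matrix.diagonal d * star U) x y = ∑ i, U x i * d i * U y i := by
  rw [Matrix.mul_apply]
  refine Finset.sum_congr rfl fun i _ => ?_
  rw [Matrix.mul_diagonal, Matrix.star_apply, star_trivial]

open Matrix in
lemma conj_diag_mul {V : Type*} [Fintype V] [DecidableEq V]
    (U : Matrix V V ℝ) (h1 : star U * U = 1) (d e : V → ℝ) :
    (U * Matrix.diagonal d * star U) * (U * Matrix.diagonal e * star U)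
      = U * Matrix.diagonal (fun i => d i * e i) * star U := by
  have h : star U * (U * Matrix.diagonal e * star U) = Matrix.diagonal e * star U := by
    rw [← Matrix.mul_assoc, ← Matrix.mul_assoc, h1, Matrix.one_mul]
  rw [Matrix.mul_assoc (U * Matrix.diagonal d) (star U), h, ← Matrix.mul_assoc,
    Matrix.mul_assoc U, Matrix.diagonal_mul_diagonal]

open Matrix in
lemma exp_entry_formula {V : Type*} [Fintype V] [DecidableEq V]
    (S : Matrix V V ℝ) (hS : S.IsHermitian) (t : ℝ) :
    NormedSpace.exp (t • S)
      = (hS.eigenvectorUnitary : Matrix V V ℝ)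
          * Matrix.diagonal (fun i => Real.exp (t * hS.eigenvalues i))
          * star (hS.eigenvectorUnitary : Matrix V V ℝ) := by
  set U : Matrix V V ℝ := (hS.eigenvectorUnitary : Matrix V V ℝ) with hU
  have h1 : (star U) * U = 1 := by
    have := Unitary.coe_star_mul_self hS.eigenvectorUnitary
    exact_mod_cast this
  have h2 : U * star U = 1 := by
    have := Unitary.coe_mul_star_self hS.eigenvectorUnitary
    exact_mod_cast this
  have hdec : t • S = U * Matrix.diagonal (fun i => t * hS.eigenvalues i) * star U := by
    conv_lhs => rw [hS.spectral_theorem]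
    rw [Unitary.conjStarAlgAut_apply]
    rw [← smul_mul_assoc, ← mul_smul_comm]
    congr 2
    funext i j
    simp [Matrix.diagonal, Matrix.smul_apply, mul_comm]
  rw [hdec]
  have hu : IsUnit U := ⟨⟨U, star U, h2, h1⟩, rfl⟩
  have hinv : U⁻¹ = star U := inv_eq_left_inv h1
  rw [← hinv, Matrix.exp_conj U _ hu, Matrix.exp_diagonal, hinv]
  congr 2
  funext i
  rw [Pi.exp_def, Real.exp_eq_exp_ℝ]

open Matrix in
lemma herm_spectral_entry {V : Type*} [Fintype V] [DecidableEq V]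
    (S : Matrix V V ℝ) (hS : S.IsHermitian) :
    S = (hS.eigenvectorUnitary : Matrix V V ℝ)
          * Matrix.diagonal (fun i => hS.eigenvalues i)
          * star (hS.eigenvectorUnitary : Matrix V V ℝ) := by
  conv_lhs => rw [hS.spectral_theorem]
  congr 2

/-- telescoping sum along a walk -/
lemma walk_telescope {V : Type*} {G : SimpleGraph V} (f : V → ℝ) :
    ∀ {a b : V} (w : G.Walk a b),
      (w.darts.map (fun d => f d.snd - f d.fst)).sum = f b - f a := by
  intro a b w
  induction w with
  | nil => simp
  | cons h p ih => simp [ih]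

/-- Cauchy–Schwarz for a list -/
lemma list_cs (l : List ℝ) :
    l.sum ^ 2 ≤ (l.length : ℝ) * (l.map (fun x => x ^ 2)).sum := by
  induction l with
  | nil => simp
  | cons a l ih =>
    have hQ : 0 ≤ (l.map (fun x => x ^ 2)).sum :=
      List.sum_nonneg (by
        intro x hx
        obtain ⟨y, -, rfl⟩ := List.mem_map.1 hx
        positivity)
    have hn : (0 : ℝ) ≤ (l.length : ℝ) := by positivity
    simp only [List.sum_cons, List.length_cons, List.map_cons, Nat.cast_succ]
    set S := l.sum
    set Q := (l.map (fun x => x ^ 2)).sum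
    set n := (l.length : ℝ)
    by_cases hl : l = []
    · subst hl; simp [S, Q, n]
    · have hn1 : (1 : ℝ) ≤ n := by
        have : 1 ≤ l.length := Nat.one_le_iff_ne_zero.2 (by simpa [List.length_eq_zero_iff] using hl)
        simp only [n]; exact_mod_cast this
      nlinarith [sq_nonneg (a * n - S), ih, hQ, hn1]


/-- Lemma 4.3 for a finite weighted graph: Hölder-type continuity of the heat
kernel, `(q_t(x₀,y) - q_t(x₀,x₀))² ≤ d(x₀,y) q_t(x₀,x₀) / t`. -/
theorem heat_kernel_holder_continuity
    {V : Type*} [Fintype V] [Nonempty V] [DecidableEq V]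
    (μ : V → V → ℝ) (hsym : ∀ x y, μ x y = μ y x)
    (hnonneg : ∀ x y, 0 ≤ μ x y) (hdiag : ∀ x, μ x x = 0)
    (hone : ∀ x y, μ x y ≠ 0 → 1 ≤ μ x y)
    (μv : V → ℝ) (hμv : ∀ x, μv x = ∑ y, μ x y)
    (hpos : ∀ x, 0 < μv x)
    (G : SimpleGraph V) (hG : ∀ x y, G.Adj x y ↔ x ≠ y ∧ 0 < μ x y)
    (hconn : G.Connected)
    (L : Matrix V V ℝ)
    (hL : ∀ x y, L x y = if x = y then -1 else μ x y / μv x)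
    (q : ℝ → V → V → ℝ)
    (hq : ∀ t x y, q t x y = NormedSpace.exp (t • L) x y / μv y)
    (t : ℝ) (ht : 0 < t) (x₀ y : V) :
    (q t x₀ y - q t x₀ x₀) ^ 2 ≤ (G.dist x₀ y : ℝ) * q t x₀ x₀ / t := by
  classical
  set sq : V → ℝ := fun x => Real.sqrt (μv x) with hsqdef
  have hsqpos : ∀ x, 0 < sq x := fun x => Real.sqrt_pos.2 (hpos x)
  have hsqmul : ∀ x, sq x * sq x = μv x := fun x => Real.mul_self_sqrt (hpos x).le
  set S : Matrix V V ℝ :=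
    Matrix.of (fun x z => if x = z then (-1 : ℝ) else μ x z / (sq x * sq z)) with hSdef
  have hSapp : ∀ x z, S x z = if x = z then (-1 : ℝ) else μ x z / (sq x * sq z) :=
    fun x z => rfl
  have hSsymm : ∀ x z, S x z = S z x := by
    intro x z
    rw [hSapp, hSapp, hsym x z, mul_comm (sq x)]
    by_cases h : x = z
    · simp [h]
    · simp [h, Ne.symm h]
  have hS : S.IsHermitian := by
    ext x z
    rw [Matrix.conjTranspose_apply, star_trivial, hSsymm]
  -- L is a conjugate of S
  have hLS : L = Matrix.diagonal (fun x => (sq x)⁻¹) * S * Matrix.diagonal sq := by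
    ext x z
    rw [Matrix.mul_diagonal, Matrix.diagonal_mul, hL, hSapp]
    by_cases h : x = z
    · subst h
      have := hsqpos x
      simp only [if_pos rfl]
      field_simp
      simp
    · simp only [if_neg h]
      rw [← hsqmul x]
      have hx := (hsqpos x).ne'
      have hz := (hsqpos z).ne'
      field_simp
  set Kmat : Matrix V V ℝ := NormedSpace.exp (t • S) with hKdef
  have hexpL : ∀ x z, NormedSpace.exp (t • L) x z = (sq x)⁻¹ * Kmat x z * sq z := by
    have hmul1 : Matrix.diagonal (fun x => (sq x)⁻¹) * Matrix.diagonal sq = 1 := by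
      rw [Matrix.diagonal_mul_diagonal]
      convert Matrix.diagonal_one
      exact inv_mul_cancel₀ (hsqpos _).ne'
    have hmul2 : Matrix.diagonal sq * Matrix.diagonal (fun x => (sq x)⁻¹) = 1 := by
      rw [Matrix.diagonal_mul_diagonal]
      convert Matrix.diagonal_one
      exact mul_inv_cancel₀ (hsqpos _).ne'
    have hu : IsUnit (Matrix.diagonal (fun x : V => (sq x)⁻¹)) :=
      ⟨⟨_, Matrix.diagonal sq, hmul1, hmul2⟩, rfl⟩
    have hinv : (Matrix.diagonal (fun x : V => (sq x)⁻¹))⁻¹ = Matrix.diagonal sq :=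
      Matrix.inv_eq_left_inv hmul2
    have hdec : t • L = Matrix.diagonal (fun x => (sq x)⁻¹) * (t • S)
        * (Matrix.diagonal (fun x : V => (sq x)⁻¹))⁻¹ := by
      rw [hinv, hLS]
      simp only [smul_mul_assoc, mul_smul_comm]
    intro x z
    rw [hdec, Matrix.exp_conj _ _ hu, hinv, ← hKdef,
      Matrix.mul_diagonal, Matrix.diagonal_mul]
  have hqS : ∀ x z, q t x z = Kmat x z / (sq x * sq z) := by
    intro x z
    rw [hq, hexpL, ← hsqmul z]
    have hx := (hsqpos x).ne'
    have hz := (hsqpos z).ne'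
    field_simp
  -- eigen decomposition
  set U : Matrix V V ℝ := (hS.eigenvectorUnitary : Matrix V V ℝ) with hUdef
  set lam : V → ℝ := hS.eigenvalues with hlamdef
  have h1 : (star U) * U = 1 := by
    have := Unitary.coe_star_mul_self hS.eigenvectorUnitary
    exact_mod_cast this
  set a : V → ℝ := fun i => Real.exp (t * lam i) with hadef
  set c : V → ℝ := fun i => U x₀ i with hcdef
  have hKd : Kmat = U * Matrix.diagonal a * star U := exp_entry_formula S hS t
  have hSd : S = U * Matrix.diagonal lam * star U := herm_spectral_entry S hS
  have hMd : Kmat * S * Kmat = U * Matrix.diagonal (fun i => a i * lam i * a i) * star U := by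
    rw [hKd, hSd, conj_diag_mul U h1 a lam, conj_diag_mul U h1 _ a]
  have hKsymm : ∀ x z, Kmat x z = Kmat z x := by
    intro x z
    rw [hKd, conj_diag_apply, conj_diag_apply]
    exact Finset.sum_congr rfl fun i _ => by ring
  -- the function f and its companion g
  set f : V → ℝ := fun z => q t x₀ z with hfdef
  set g : V → ℝ := fun z => Kmat x₀ z / sq x₀ with hgdef
  have hgf : ∀ z, sq z * f z = g z := by
    intro z
    rw [hfdef]
    simp only
    rw [hqS, hgdef]
    have hz := (hsqpos z).ne'
    have hx := (hsqpos x₀).ne'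
    field_simp
  set E : ℝ := (1/2) * ∑ x, ∑ z, μ x z * (f x - f z)^2 with hEdef
  have hE_nonneg : 0 ≤ E := by
    apply mul_nonneg (by norm_num)
    refine Finset.sum_nonneg fun x _ => Finset.sum_nonneg fun z _ => ?_
    exact mul_nonneg (hnonneg x z) (sq_nonneg _)
  -- E in terms of the quadratic form of S
  have hEform : E = -(∑ x, ∑ z, S x z * g x * g z) := by
    have key : ∀ x z, μ x z * (f x - f z)^2
        = μ x z * f x^2 + μ x z * f z^2 - 2*(S x z * g x * g z)
          - 2*(if x = z then g x * g x else 0) := by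
      intro x z
      by_cases h : x = z
      · subst h
        rw [hdiag x, hSapp]
        simp only [eq_self_iff_true, if_true]
        ring
      · have e1 : S x z * g x * g z = μ x z * f x * f z := by
          rw [hSapp, if_neg h, ← hgf x, ← hgf z]
          have hx := (hsqpos x).ne'
          have hz := (hsqpos z).ne'
          field_simp
        rw [if_neg h, e1]
        ring
    have h0 : (∑ x, ∑ z, μ x z * (f x - f z)^2)
        = (∑ x, ∑ z, μ x z * f x^2) + (∑ x, ∑ z, μ x z * f z^2)
          - 2*(∑ x, ∑ z, S x z * g x * g z)
          - 2*(∑ x, ∑ z, if x = z then g x * g x else 0) := by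
      rw [Finset.sum_congr rfl fun x _ => Finset.sum_congr rfl fun z _ => key x z]
      simp only [Finset.sum_add_distrib, Finset.sum_sub_distrib, ← Finset.mul_sum]
    have hA1 : (∑ x, ∑ z, μ x z * f x^2) = ∑ x, g x * g x := by
      refine Finset.sum_congr rfl fun x _ => ?_
      rw [← Finset.sum_mul, ← hμv, ← hgf x, ← hsqmul x]
      ring
    have hA2 : (∑ x, ∑ z, μ x z * f z^2) = ∑ z, g z * g z := by
      rw [Finset.sum_comm]
      refine Finset.sum_congr rfl fun z _ => ?_
      have : ∑ x, μ x z = μv z := by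
        rw [hμv]
        exact Finset.sum_congr rfl fun x _ => hsym x z
      rw [← Finset.sum_mul, this, ← hgf z, ← hsqmul z]
      ring
    have hA3 : (∑ x, ∑ z, if x = z then g x * g x else 0) = ∑ x, g x * g x := by
      refine Finset.sum_congr rfl fun x _ => ?_
      simp
    rw [hEdef, h0, hA1, hA2, hA3]
    ring
  -- the quadratic form in eigencoordinates
  have hEeig : E = -(∑ i, c i * (a i * lam i * a i) * c i) / μv x₀ := by
    rw [hEform]
    have hM00 : (Kmat * S * Kmat) x₀ x₀ = ∑ i, c i * (a i * lam i * a i) * c i := by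
      rw [hMd, conj_diag_apply]
    have hM00' : (Kmat * S * Kmat) x₀ x₀ = ∑ x, ∑ z, Kmat x₀ x * (S x z * Kmat z x₀) := by
      rw [Matrix.mul_assoc, Matrix.mul_apply]
      refine Finset.sum_congr rfl fun x _ => ?_
      rw [Matrix.mul_apply, Finset.mul_sum]
    have hxy : ∑ x, ∑ z, S x z * g x * g z
        = (∑ x, ∑ z, Kmat x₀ x * (S x z * Kmat z x₀)) / μv x₀ := by
      rw [Finset.sum_div]
      refine Finset.sum_congr rfl fun x _ => ?_
      rw [Finset.sum_div]
      refine Finset.sum_congr rfl fun z _ => ?_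
      rw [hgdef]
      simp only
      rw [hKsymm z x₀, ← hsqmul x₀]
      have h0 := (hsqpos x₀).ne'
      field_simp
    rw [hxy, ← hM00', hM00, neg_div]
  have hQeig : q t x₀ x₀ = (∑ i, c i * a i * c i) / μv x₀ := by
    rw [hqS, hsqmul, hKd, conj_diag_apply]
  -- Claim B : t * E ≤ q t x₀ x₀
  have hB : t * E ≤ q t x₀ x₀ := by
    have hterm : ∀ i, t * -(c i * (a i * lam i * a i) * c i) ≤ c i * a i * c i := by
      intro i
      have h2 : -(t * lam i) ≤ Real.exp (-(t * lam i)) := by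
        linarith [Real.add_one_le_exp (-(t * lam i))]
      have h1 : -(t * lam i) * a i ≤ 1 := by
        calc -(t * lam i) * a i ≤ Real.exp (-(t * lam i)) * a i :=
              mul_le_mul_of_nonneg_right h2 (Real.exp_pos _).le
          _ = 1 := by
              rw [hadef]
              simp only
              rw [← Real.exp_add, neg_add_cancel, Real.exp_zero]
      have h3 : 0 ≤ a i * (c i * c i) := mul_nonneg (Real.exp_pos _).le (mul_self_nonneg _)
      calc t * -(c i * (a i * lam i * a i) * c i)
          = (-(t * lam i) * a i) * (a i * (c i * c i)) := by ring
        _ ≤ 1 * (a i * (c i * c i)) := mul_le_mul_of_nonneg_right h1 h3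
        _ = c i * a i * c i := by ring
    have hm : 0 < μv x₀ := hpos x₀
    rw [hEeig, hQeig, ← mul_div_assoc]
    rw [div_le_div_iff_of_pos_right hm]
    calc t * -∑ i, c i * (a i * lam i * a i) * c i
        = ∑ i, t * -(c i * (a i * lam i * a i) * c i) := by
          rw [← Finset.sum_neg_distrib, Finset.mul_sum]
      _ ≤ ∑ i, c i * a i * c i := Finset.sum_le_sum fun i _ => hterm i
  -- Claim A : (f y - f x₀)^2 ≤ dist * E
  have hA : (f y - f x₀)^2 ≤ (G.dist x₀ y : ℝ) * E := by
    obtain ⟨p, hplen⟩ := hconn.exists_walk_length_eq_dist x₀ y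
    have hpath : p.IsPath := SimpleGraph.Walk.isPath_of_length_eq_dist p hplen
    set l : List ℝ := p.darts.map (fun d => f d.snd - f d.fst) with hl
    have htel : l.sum = f y - f x₀ := walk_telescope f p
    have hllen : (l.length : ℝ) = (G.dist x₀ y : ℝ) := by
      rw [hl, List.length_map, SimpleGraph.Walk.length_darts, hplen]
    have hcs : (f y - f x₀)^2 ≤ (G.dist x₀ y : ℝ) * (l.map (fun x => x ^ 2)).sum := by
      rw [← htel, ← hllen]
      exact list_cs l
    -- bound the sum of squares along the path by the weighted sum
    have hmuone : ∀ d ∈ p.darts, 1 ≤ μ d.fst d.snd := by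
      intro d _
      have hadj := d.adj
      exact hone _ _ (ne_of_gt ((hG _ _).1 hadj).2)
    have hstep1 : (l.map (fun x => x ^ 2)).sum
        ≤ (p.darts.map (fun d => μ d.fst d.snd * (f d.fst - f d.snd)^2)).sum := by
      rw [hl, List.map_map]
      refine List.sum_le_sum ?_
      intro d hd
      have h1 := hmuone d hd
      have h2 : (0:ℝ) ≤ (f d.fst - f d.snd)^2 := sq_nonneg _
      have h3 : ((fun x => x ^ 2) ∘ fun d : G.Dart => f d.snd - f d.fst) d
          = (f d.fst - f d.snd)^2 := by
        simp only [Function.comp_apply]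
        ring
      rw [h3]
      nlinarith
    -- the weighted sum over darts is at most E
    set w : V × V → ℝ := fun pr => μ pr.1 pr.2 * (f pr.1 - f pr.2)^2 with hwdef
    have hwnonneg : ∀ pr : V × V, 0 ≤ w pr := fun pr => mul_nonneg (hnonneg _ _) (sq_nonneg _)
    set l1 : List (V × V) := p.darts.map (fun d => d.toProd) with hl1
    set l2 : List (V × V) := p.darts.map (fun d => d.toProd.swap) with hl2
    have hdn : p.darts.Nodup :=
      SimpleGraph.Walk.darts_nodup_of_support_nodup hpath.support_nodup
    have hen : p.edges.Nodup := hpath.isTrail.edges_nodup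
    have hl1n : l1.Nodup := hdn.map SimpleGraph.Dart.toProd_injective
    have hl2n : l2.Nodup := hdn.map (fun d e hde => by
      apply SimpleGraph.Dart.toProd_injective
      exact Prod.swap_injective hde)
    have hdisj : l1.Disjoint l2 := by
      intro pr h1' h2'
      obtain ⟨d, hd, hdp⟩ := List.mem_map.1 h1'
      obtain ⟨e, he, hep⟩ := List.mem_map.1 h2'
      have hde : d = e.symm := by
        apply SimpleGraph.Dart.toProd_injective
        rw [SimpleGraph.Dart.symm_toProd, hdp, ← hep]
      have hedge : d.edge = e.edge := by rw [hde, SimpleGraph.Dart.edge_symm]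
      have : d = e := List.inj_on_of_nodup_map hen hd he hedge
      rw [this] at hde
      exact SimpleGraph.Dart.symm_ne e hde.symm
    have hnodup12 : (l1 ++ l2).Nodup := by
      rw [List.nodup_append]
      exact ⟨hl1n, hl2n, fun a ha b hb hab => by subst hab; exact hdisj ha hb⟩
    have hsum12 : ((l1 ++ l2).map w).sum ≤ ∑ x, ∑ z, μ x z * (f x - f z)^2 := by
      have h1' : ((l1 ++ l2).map w).sum = ∑ pr ∈ (l1 ++ l2).toFinset, w pr :=
        (List.sum_toFinset w hnodup12).symm
      have h2' : ∑ pr ∈ (l1 ++ l2).toFinset, w pr ≤ ∑ pr : V × V, w pr :=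
        Finset.sum_le_sum_of_subset_of_nonneg (Finset.subset_univ _)
          (fun pr _ _ => hwnonneg pr)
      have h3' : ∑ pr : V × V, w pr = ∑ x, ∑ z, μ x z * (f x - f z)^2 := by
        rw [Fintype.sum_prod_type]
      rw [h1', ← h3']
      exact h2'
    have hww : (l2.map w).sum = (l1.map w).sum := by
      rw [hl1, hl2, List.map_map, List.map_map]
      congr 1
      refine List.map_congr_left ?_
      intro d _
      simp only [Function.comp_apply, hwdef, Prod.fst_swap, Prod.snd_swap]
      rw [hsym]
      ring
    have hsum1w : (p.darts.map (fun d => μ d.fst d.snd * (f d.fst - f d.snd)^2)).sum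
        = (l1.map w).sum := by
      rw [hl1, List.map_map]
      rfl
    have hfinal : (l1.map w).sum ≤ E := by
      have : (l1.map w).sum + (l2.map w).sum = ((l1 ++ l2).map w).sum := by
        rw [List.map_append, List.sum_append]
      rw [hww] at this
      rw [hEdef]
      linarith [hsum12, this]
    have hd0 : (0:ℝ) ≤ (G.dist x₀ y : ℝ) := Nat.cast_nonneg _
    calc (f y - f x₀)^2 ≤ (G.dist x₀ y : ℝ) * (l.map (fun x => x ^ 2)).sum := hcs
      _ ≤ (G.dist x₀ y : ℝ) * E := by
          apply mul_le_mul_of_nonneg_left _ hd0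
          exact le_trans hstep1 (hsum1w ▸ hfinal)
  -- conclusion
  have hd0 : (0:ℝ) ≤ (G.dist x₀ y : ℝ) := Nat.cast_nonneg _
  have hEQ : E ≤ q t x₀ x₀ / t := (le_div_iff₀' ht).2 hB
  calc (q t x₀ y - q t x₀ x₀)^2 = (f y - f x₀)^2 := rfl
    _ ≤ (G.dist x₀ y : ℝ) * E := hA
    _ ≤ (G.dist x₀ y : ℝ) * (q t x₀ x₀ / t) := by
        exact mul_le_mul_of_nonneg_left hEQ hd0
    _ = (G.dist x₀ y : ℝ) * q t x₀ x₀ / t := by ring
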